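/- Let Q be a measure on a measurable space X, β : X → ℝ a measurable function with β(x) > 0 for Q-almost every x, and P := Q.withDensity β. Define the logistic risk R(f) := (1/2)∫log(1 + e^{−f}) dP + (1/2)∫log(1 + e^{f}) dQ. Assume f is measurable and that the functions β·f, β·log β, (1+β)·log(1+β), and (1+β)·log(1+e^{f}) are Q-integrable. Then R(f) − R(log∘β) = (1/2)∫[ (1+β)·log((1 + e^{f})/(1 + β)) − β·(f − log β) ] dQ, the right side being one half of the Bregman divergence B_F(β, e^f) generated by F(h) = ∫[h·log h − (1+h)·log(1+h)] dQ. -/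
import Mathlib

open MeasureTheory
open scoped NNReal ENNReal

lemma log_one_add_exp_neg (v : ℝ) :
    Real.log (1 + Real.exp (-v)) = Real.log (1 + Real.exp v) - v := by
  have h : (1:ℝ) + Real.exp (-v) = (1 + Real.exp v) * Real.exp (-v) := by
    rw [add_mul, one_mul, ← Real.exp_add, add_neg_cancel, Real.exp_zero, add_comm]
  rw [h, Real.log_mul (by positivity) (Real.exp_ne_zero _), Real.log_exp]
  ring

lemma conv_aux {X : Type*} [MeasurableSpace X] (Q : Measure X) (β : X → ℝ)
    (hβmeas : Measurable β) (hβpos : ∀ᵐ x ∂Q, 0 < β x) (g : X → ℝ) :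
    ∫ x, g x ∂(Q.withDensity (fun x => ENNReal.ofReal (β x)))
      = ∫ x, β x * g x ∂Q := by
  have h : (fun x => ENNReal.ofReal (β x)) = fun x => ((β x).toNNReal : ℝ≥0∞) := rfl
  rw [h, integral_withDensity_eq_integral_smul hβmeas.real_toNNReal g]
  refine integral_congr_ae ?_
  filter_upwards [hβpos] with x hx
  simp [NNReal.smul_def, Real.coe_toNNReal _ hx.le]

/-- LR excess risk equals one half of the Bregman divergence generated by
`F(h) = ∫ [h log h - (1+h) log(1+h)] dQ`: with `dP = β dQ`, `β > 0` a.e., and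
`R(f) = (1/2)∫ log(1+e^{-f}) dP + (1/2)∫ log(1+e^f) dQ`, one has
`R(f) - R(log β) = (1/2)∫ [(1+β) log((1+e^f)/(1+β)) - β (f - log β)] dQ`. -/
theorem stmt10 {X : Type*} [MeasurableSpace X] (Q : Measure X) (β : X → ℝ)
    (hβmeas : Measurable β) (hβpos : ∀ᵐ x ∂Q, 0 < β x)
    (f : X → ℝ) (hfmeas : Measurable f)
    (h1 : Integrable (fun x => β x * f x) Q)
    (h2 : Integrable (fun x => β x * Real.log (β x)) Q)
    (h3 : Integrable (fun x => (1 + β x) * Real.log (1 + β x)) Q)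
    (h4 : Integrable (fun x => (1 + β x) * Real.log (1 + Real.exp (f x))) Q) :
    let P : Measure X := Q.withDensity (fun x => ENNReal.ofReal (β x))
    let R : (X → ℝ) → ℝ := fun g =>
      (1 / 2) * ∫ x, Real.log (1 + Real.exp (-(g x))) ∂P
        + (1 / 2) * ∫ x, Real.log (1 + Real.exp (g x)) ∂Q
    R f - R (fun x => Real.log (β x))
      = (1 / 2) * ∫ x,
          ((1 + β x) * Real.log ((1 + Real.exp (f x)) / (1 + β x))
            - β x * (f x - Real.log (β x))) ∂Q := by
  intro P R
  have hL1 : Integrable (fun x => Real.log (1 + Real.exp (f x))) Q := by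
    refine h4.mono' ((measurable_const.add hfmeas.exp).log).aestronglyMeasurable ?_
    filter_upwards [hβpos] with x hx
    have hpos : (0:ℝ) < Real.log (1 + Real.exp (f x)) :=
      Real.log_pos (by linarith [Real.exp_pos (f x)])
    rw [Real.norm_eq_abs, abs_of_pos hpos]
    nlinarith [mul_pos hx hpos]
  have hL2 : Integrable (fun x => Real.log (1 + β x)) Q := by
    refine h3.mono' ((measurable_const.add hβmeas).log).aestronglyMeasurable ?_
    filter_upwards [hβpos] with x hx
    have hpos : (0:ℝ) < Real.log (1 + β x) := Real.log_pos (by linarith)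
    rw [Real.norm_eq_abs, abs_of_pos hpos]
    nlinarith [mul_pos hx hpos]
  have hB1 : Integrable (fun x => β x * Real.log (1 + Real.exp (f x))) Q := by
    refine (h4.sub hL1).congr (Filter.Eventually.of_forall fun x => ?_)
    simp only [Pi.sub_apply]; ring
  have hB2 : Integrable (fun x => β x * Real.log (1 + β x)) Q := by
    refine (h3.sub hL2).congr (Filter.Eventually.of_forall fun x => ?_)
    simp only [Pi.sub_apply]; ring
  -- P-integrals in terms of Q
  have e1 : ∫ x, Real.log (1 + Real.exp (-(f x))) ∂P
      = ∫ x, (β x * Real.log (1 + Real.exp (f x)) - β x * f x) ∂Q := by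
    rw [conv_aux Q β hβmeas hβpos]
    refine integral_congr_ae (Filter.Eventually.of_forall fun x => ?_)
    dsimp only
    rw [log_one_add_exp_neg]
    ring
  have e2 : ∫ x, Real.log (1 + Real.exp (-(Real.log (β x)))) ∂P
      = ∫ x, (β x * Real.log (1 + β x) - β x * Real.log (β x)) ∂Q := by
    rw [conv_aux Q β hβmeas hβpos]
    refine integral_congr_ae ?_
    filter_upwards [hβpos] with x hx
    rw [log_one_add_exp_neg, Real.exp_log hx]
    ring
  have e3 : ∫ x, Real.log (1 + Real.exp (Real.log (β x))) ∂Q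
      = ∫ x, Real.log (1 + β x) ∂Q := by
    refine integral_congr_ae ?_
    filter_upwards [hβpos] with x hx
    rw [Real.exp_log hx]
  have e4 : ∫ x, ((1 + β x) * Real.log ((1 + Real.exp (f x)) / (1 + β x))
        - β x * (f x - Real.log (β x))) ∂Q
      = ∫ x, ((β x * Real.log (1 + Real.exp (f x)) + Real.log (1 + Real.exp (f x))
          - (β x * Real.log (1 + β x) + Real.log (1 + β x)))
          - β x * f x + β x * Real.log (β x)) ∂Q := by
    refine integral_congr_ae ?_
    filter_upwards [hβpos] with x hx
    rw [Real.log_div (by positivity) (by positivity)]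
    ring
  -- decompositions
  have I1 : ∫ x, (β x * Real.log (1 + Real.exp (f x)) - β x * f x) ∂Q
      = (∫ x, β x * Real.log (1 + Real.exp (f x)) ∂Q) - ∫ x, β x * f x ∂Q :=
    integral_sub hB1 h1
  have I2 : ∫ x, (β x * Real.log (1 + β x) - β x * Real.log (β x)) ∂Q
      = (∫ x, β x * Real.log (1 + β x) ∂Q) - ∫ x, β x * Real.log (β x) ∂Q :=
    integral_sub hB2 h2
  have a1 : ∫ x, (β x * Real.log (1 + Real.exp (f x)) + Real.log (1 + Real.exp (f x))) ∂Q
      = (∫ x, β x * Real.log (1 + Real.exp (f x)) ∂Q) + ∫ x, Real.log (1 + Real.exp (f x)) ∂Q :=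
    integral_add hB1 hL1
  have a2 : ∫ x, (β x * Real.log (1 + β x) + Real.log (1 + β x)) ∂Q
      = (∫ x, β x * Real.log (1 + β x) ∂Q) + ∫ x, Real.log (1 + β x) ∂Q :=
    integral_add hB2 hL2
  have a3 : ∫ x, ((β x * Real.log (1 + Real.exp (f x)) + Real.log (1 + Real.exp (f x)))
        - (β x * Real.log (1 + β x) + Real.log (1 + β x))) ∂Q
      = (∫ x, (β x * Real.log (1 + Real.exp (f x)) + Real.log (1 + Real.exp (f x))) ∂Q)
        - ∫ x, (β x * Real.log (1 + β x) + Real.log (1 + β x)) ∂Q :=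
    integral_sub (hB1.add hL1) (hB2.add hL2)
  have a4 : ∫ x, ((β x * Real.log (1 + Real.exp (f x)) + Real.log (1 + Real.exp (f x))
        - (β x * Real.log (1 + β x) + Real.log (1 + β x))) - β x * f x) ∂Q
      = (∫ x, ((β x * Real.log (1 + Real.exp (f x)) + Real.log (1 + Real.exp (f x)))
          - (β x * Real.log (1 + β x) + Real.log (1 + β x))) ∂Q) - ∫ x, β x * f x ∂Q :=
    integral_sub ((hB1.add hL1).sub (hB2.add hL2)) h1
  have a5 : ∫ x, ((β x * Real.log (1 + Real.exp (f x)) + Real.log (1 + Real.exp (f x))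
        - (β x * Real.log (1 + β x) + Real.log (1 + β x)))
        - β x * f x + β x * Real.log (β x)) ∂Q
      = (∫ x, ((β x * Real.log (1 + Real.exp (f x)) + Real.log (1 + Real.exp (f x))
          - (β x * Real.log (1 + β x) + Real.log (1 + β x))) - β x * f x) ∂Q)
        + ∫ x, β x * Real.log (β x) ∂Q :=
    integral_add (((hB1.add hL1).sub (hB2.add hL2)).sub h1) h2
  simp only [R, e1, e2, e3]
  rw [e4, a5, a4, a3, a1, a2, I1, I2]
  ring
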